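/- The toric g-recursion g(DL)=xy·g(L), together with g(∅)=1 and g(CL)=y·g(L), determines a unique generalised h-vector h on the span of convex polytope flag vectors, and this h satisfies h(W·pt) ∈ ℤ[x,y] with palindromic values on every CD-word W. -/
import Mathlib


open MvPolynomial

noncomputable section

/-- Polynomials in two variables x, y over ℚ (values of (flag-)h-vectors). -/
abbrev R2 : Type := MvPolynomial (Fin 2) ℚ

def px : R2 := X 0
def py : R2 := X 1

/-- Keys `k = ((d₁,…,d_r),(c₁,…,c_r))` indexing the formal symbols `w_k`. -/
abbrev Key : Type := List ℕ × List ℕ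

/-- The module of keyed polynomials `Σ_k p_k w_k`. -/
abbrev KMod : Type := Key →₀ R2

/-- The formal symbol `w_k`. -/
def wsym (k : Key) : KMod := Finsupp.single k 1

/-- `⟨j⟩ = y^j + x y^(j-1) + ⋯ + x^j`. -/
def br (j : ℕ) : R2 := ∑ t ∈ Finset.range (j + 1), px ^ t * py ^ (j - t)

/-- `⟨i,j⟩ = (xy)^i ⟨j⟩`. -/
def brr (i j : ℕ) : R2 := (px * py) ^ i * br j

/-- degree of a key: `2 Σ dᵢ + Σ cᵢ + 3r`. -/
def degKey (k : Key) : ℕ := 2 * k.1.sum + k.2.sum + 3 * k.1.length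

variable {V : Type} [AddCommGroup V] [Module ℚ V]

/-- the flag vector of the CD-word `w` applied to a point (`true` = cone `C`,
`false` = `D`), read with the outermost operator first. -/
def cdVec (Cop Dop : V →ₗ[ℚ] V) (ptv : V) : List Bool → V
  | [] => ptv
  | true :: w => Cop (cdVec Cop Dop ptv w)
  | false :: w => Dop (cdVec Cop Dop ptv w)

/-- dimension of the polytope `W·pt` for a CD-word `W`. -/
def wordDim (w : List Bool) : ℕ := w.count true + 2 * w.count false

/-- the toric recursion `g(DL) = xy·g(L)`, together with
`g(∅) = 1` (so `g(pt) = y`) and `g(CL) = y·g(L)`, determines a unique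
generalised h-vector on the span of convex polytope flag vectors (which,
by Bayer–Billera, is spanned by the CD-words applied to a point); and this
h-vector takes integer, palindromic values on every CD-word. -/
theorem stmt18 {V : Type} [AddCommGroup V] [Module ℚ V]
    (Cop Dop : V →ₗ[ℚ] V) (ptv : V)
    (hspan : Submodule.span ℚ (Set.range (cdVec Cop Dop ptv)) = ⊤)
    (h₁ g₁ h₂ g₂ : V →ₗ[ℚ] R2)
    (hpt₁ : h₁ ptv = 1) (gpt₁ : g₁ ptv = py)
    (hC₁ : ∀ v : V, h₁ (Cop v) = g₁ v + px * h₁ v)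
    (hD₁ : ∀ v : V, h₁ (Dop v) = px * py * h₁ v)
    (gC₁ : ∀ v : V, g₁ (Cop v) = py * g₁ v)
    (gD₁ : ∀ v : V, g₁ (Dop v) = px * py * g₁ v)
    (hpt₂ : h₂ ptv = 1) (gpt₂ : g₂ ptv = py)
    (hC₂ : ∀ v : V, h₂ (Cop v) = g₂ v + px * h₂ v)
    (hD₂ : ∀ v : V, h₂ (Dop v) = px * py * h₂ v)
    (gC₂ : ∀ v : V, g₂ (Cop v) = py * g₂ v)
    (gD₂ : ∀ v : V, g₂ (Dop v) = px * py * g₂ v) :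
    h₁ = h₂
    ∧ ∀ w : List Bool,
        rename ⇑(Equiv.swap (0 : Fin 2) 1) (h₁ (cdVec Cop Dop ptv w))
            = h₁ (cdVec Cop Dop ptv w)
        ∧ ∀ m : Fin 2 →₀ ℕ, ∃ z : ℤ,
            MvPolynomial.coeff m (h₁ (cdVec Cop Dop ptv w)) = (z : ℚ) := by
  set σ : R2 →ₐ[ℚ] R2 := rename ⇑(Equiv.swap (0 : Fin 2) 1) with hσ
  have σx : σ px = py := by simp [px, py, hσ, rename_X]
  have σy : σ py = px := by simp [px, py, hσ, rename_X]
  set S : Subring R2 := (MvPolynomial.map (Int.castRingHom ℚ)).range with hS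
  have pxS : px ∈ S := ⟨X 0, by simp [px]⟩
  have pyS : py ∈ S := ⟨X 1, by simp [py]⟩
  have key : ∀ w : List Bool,
      h₁ (cdVec Cop Dop ptv w) = h₂ (cdVec Cop Dop ptv w)
      ∧ g₁ (cdVec Cop Dop ptv w) = g₂ (cdVec Cop Dop ptv w)
      ∧ σ (h₁ (cdVec Cop Dop ptv w)) = h₁ (cdVec Cop Dop ptv w)
      ∧ (py - px) * h₁ (cdVec Cop Dop ptv w)
          = g₁ (cdVec Cop Dop ptv w) - σ (g₁ (cdVec Cop Dop ptv w))
      ∧ h₁ (cdVec Cop Dop ptv w) ∈ S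
      ∧ g₁ (cdVec Cop Dop ptv w) ∈ S := by
    intro w
    induction w with
    | nil =>
      simp only [cdVec, hpt₁, hpt₂, gpt₁, gpt₂]
      refine ⟨trivial, trivial, map_one σ, by rw [σy]; ring, S.one_mem, pyS⟩
    | cons b w ih =>
      obtain ⟨ih1, ih2, ih3, ih4, ih5, ih6⟩ := ih
      cases b with
      | true =>
        simp only [cdVec, hC₁, hC₂, gC₁, gC₂]
        refine ⟨by rw [ih1, ih2], by rw [ih2], ?_, ?_, ?_, ?_⟩
        · rw [map_add, map_mul, σx, ih3]
          have : σ (g₁ (cdVec Cop Dop ptv w))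
              = g₁ (cdVec Cop Dop ptv w) - (py - px) * h₁ (cdVec Cop Dop ptv w) := by
            rw [ih4]; ring
          rw [this]; ring
        · rw [map_mul, σy]
          linear_combination px * ih4
        · exact S.add_mem ih6 (S.mul_mem pxS ih5)
        · exact S.mul_mem pyS ih6
      | false =>
        simp only [cdVec, hD₁, hD₂, gD₁, gD₂]
        refine ⟨by rw [ih1], by rw [ih2], ?_, ?_, ?_, ?_⟩
        · rw [map_mul, map_mul, σx, σy, ih3]; ring
        · rw [map_mul, map_mul, σx, σy]
          calc (py - px) * (px * py * h₁ (cdVec Cop Dop ptv w))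
              = px * py * ((py - px) * h₁ (cdVec Cop Dop ptv w)) := by ring
            _ = px * py * (g₁ (cdVec Cop Dop ptv w) - σ (g₁ (cdVec Cop Dop ptv w))) := by
                rw [ih4]
            _ = _ := by ring
        · exact S.mul_mem (S.mul_mem pxS pyS) ih5
        · exact S.mul_mem (S.mul_mem pxS pyS) ih6
  constructor
  · apply LinearMap.ext_on hspan
    rintro _ ⟨w, rfl⟩
    exact (key w).1
  · intro w
    obtain ⟨-, -, hsym, -, hmem, -⟩ := key w
    refine ⟨hsym, ?_⟩
    intro m
    obtain ⟨q, hq⟩ := hmem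
    exact ⟨MvPolynomial.coeff m q, by rw [← hq, MvPolynomial.coeff_map]; rfl⟩
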